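/- For any constants c₀ > 0 and c₁ > 1 there is a constant c₂ > 0 such that for all x > c₀, the integral from x to c₁x of |σ̂₁(u)|² du is at least c₂, where σ̂₁ denotes the Fourier transform of arc-length measure on the unit circle (a radial function). -/

import Mathlib

open MeasureTheory Real intervalIntegral

/-- The Fourier transform of arc-length measure on the unit circle in `ℝ²`,
viewed as a radial function: `σ̂₁(ξ) = ∫_{circle} e^{-2πi x·ξ} dx`, which by rotation
invariance equals `∫_0^{2π} cos(2π r cos θ) dθ` where `r = |ξ|`. -/
noncomputable def sigmaHatOne (r : ℝ) : ℝ :=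
  ∫ θ in (0:ℝ)..(2 * π), Real.cos (2 * π * r * Real.cos θ)

noncomputable def fa (x : ℝ) : ℝ :=
  ∫ θ in (0:ℝ)..(2 * π), -(2 * π * Real.cos θ) * Real.sin (2 * π * x * Real.cos θ)

noncomputable def fb (x : ℝ) : ℝ :=
  ∫ θ in (0:ℝ)..(2 * π), -((2 * π * Real.cos θ) ^ 2) * Real.cos (2 * π * x * Real.cos θ)

lemma inner_hasDeriv (θ x : ℝ) :
    HasDerivAt (fun y : ℝ => 2 * π * y * Real.cos θ) (2 * π * Real.cos θ) x := by
  simpa using ((hasDerivAt_id x).const_mul (2 * π)).mul_const (Real.cos θ)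

lemma hasDerivAt_f (x : ℝ) : HasDerivAt sigmaHatOne (fa x) x := by
  have key := intervalIntegral.hasDerivAt_integral_of_dominated_loc_of_deriv_le
    (F := fun y θ => Real.cos (2 * π * y * Real.cos θ))
    (F' := fun y θ => -(2 * π * Real.cos θ) * Real.sin (2 * π * y * Real.cos θ))
    (x₀ := x) (a := 0) (b := 2 * π) (μ := volume) (bound := fun _ => 2 * π)
    (Metric.ball_mem_nhds x (by norm_num : (0:ℝ) < 1))
    (Filter.Eventually.of_forall fun y =>
      (Continuous.aestronglyMeasurable (by continuity)))
    ((Continuous.intervalIntegrable (by continuity)) _ _)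
    (Continuous.aestronglyMeasurable (by continuity)).restrict
    (Filter.Eventually.of_forall fun θ _ => fun y _ => by
      have h1 : |Real.sin (2 * π * y * Real.cos θ)| ≤ 1 := Real.abs_sin_le_one _
      have h2 : |Real.cos θ| ≤ 1 := Real.abs_cos_le_one _
      have hπ : (0:ℝ) < π := Real.pi_pos
      rw [Real.norm_eq_abs, abs_mul, abs_neg, abs_mul, abs_mul]
      calc |2| * |π| * |Real.cos θ| * |Real.sin (2 * π * y * Real.cos θ)|
          ≤ |2| * |π| * 1 * 1 := by
            apply mul_le_mul (by apply mul_le_mul_of_nonneg_left h2 (by positivity)) h1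
              (abs_nonneg _) (by positivity)
        _ = 2 * π := by rw [abs_of_pos hπ]; norm_num)
    ((Continuous.intervalIntegrable continuous_const) _ _)
    (Filter.Eventually.of_forall fun θ _ => fun y _ => by
      simpa [neg_mul, mul_comm] using (inner_hasDeriv θ y).cos)
  exact key.2

lemma hasDerivAt_fa (x : ℝ) : HasDerivAt fa (fb x) x := by
  have key := intervalIntegral.hasDerivAt_integral_of_dominated_loc_of_deriv_le
    (F := fun y θ => -(2 * π * Real.cos θ) * Real.sin (2 * π * y * Real.cos θ))
    (F' := fun y θ => -((2 * π * Real.cos θ) ^ 2) * Real.cos (2 * π * y * Real.cos θ))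
    (x₀ := x) (a := 0) (b := 2 * π) (μ := volume) (bound := fun _ => (2 * π) ^ 2)
    (Metric.ball_mem_nhds x (by norm_num : (0:ℝ) < 1))
    (Filter.Eventually.of_forall fun y =>
      (Continuous.aestronglyMeasurable (by continuity)))
    ((Continuous.intervalIntegrable (by continuity)) _ _)
    (Continuous.aestronglyMeasurable (by continuity)).restrict
    (Filter.Eventually.of_forall fun θ _ => fun y _ => by
      have h1 : |Real.cos (2 * π * y * Real.cos θ)| ≤ 1 := Real.abs_cos_le_one _
      have h2 : |Real.cos θ| ≤ 1 := Real.abs_cos_le_one _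
      have hπ : (0:ℝ) < π := Real.pi_pos
      rw [Real.norm_eq_abs, abs_mul, abs_neg, abs_pow, abs_mul, abs_mul]
      calc (|2| * |π| * |Real.cos θ|) ^ 2 * |Real.cos (2 * π * y * Real.cos θ)|
          ≤ (|2| * |π| * 1) ^ 2 * 1 := by
            apply mul_le_mul _ h1 (abs_nonneg _) (by positivity)
            apply pow_le_pow_left₀ (by positivity)
            exact mul_le_mul_of_nonneg_left h2 (by positivity)
        _ = (2 * π) ^ 2 := by rw [abs_of_pos hπ]; norm_num)
    ((Continuous.intervalIntegrable continuous_const) _ _)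
    (Filter.Eventually.of_forall fun θ _ => fun y _ => by
      have := ((inner_hasDeriv θ y).sin).const_mul (-(2 * π * Real.cos θ))
      refine this.congr_deriv ?_
      ring)
  exact key.2

lemma bessel (x : ℝ) : x * fb x + fa x + (2 * π) ^ 2 * x * sigmaHatOne x = 0 := by
  have hπ : (0:ℝ) < π := Real.pi_pos
  -- FTC identity
  have hderiv : ∀ θ ∈ Set.uIcc (0:ℝ) (2 * π),
      HasDerivAt (fun t : ℝ => Real.sin t * Real.sin (2 * π * x * Real.cos t))
        (Real.cos θ * Real.sin (2 * π * x * Real.cos θ) -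
          2 * π * x * ((Real.sin θ) ^ 2 * Real.cos (2 * π * x * Real.cos θ))) θ := by
    intro θ _
    have h1 : HasDerivAt (fun t : ℝ => 2 * π * x * Real.cos t)
        (2 * π * x * (-Real.sin θ)) θ := (Real.hasDerivAt_cos θ).const_mul (2 * π * x)
    have h2 := (Real.hasDerivAt_sin θ).mul h1.sin
    refine h2.congr_deriv ?_
    ring
  have hc0 : Continuous fun θ : ℝ => Real.cos (2 * π * x * Real.cos θ) :=
    Real.continuous_cos.comp (continuous_const.mul Real.continuous_cos)
  have hs0 : Continuous fun θ : ℝ => Real.sin (2 * π * x * Real.cos θ) :=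
    Real.continuous_sin.comp (continuous_const.mul Real.continuous_cos)
  have hcont1 : Continuous fun θ : ℝ => Real.cos θ * Real.sin (2 * π * x * Real.cos θ) :=
    Real.continuous_cos.mul hs0
  have hcont2 : Continuous fun θ : ℝ => (Real.sin θ) ^ 2 * Real.cos (2 * π * x * Real.cos θ) :=
    (Real.continuous_sin.pow 2).mul hc0
  have hcont3 : Continuous fun θ : ℝ => (Real.cos θ) ^ 2 * Real.cos (2 * π * x * Real.cos θ) :=
    (Real.continuous_cos.pow 2).mul hc0
  have h0 := intervalIntegral.integral_eq_sub_of_hasDerivAt hderiv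
    (((hcont1.sub (continuous_const.mul hcont2 : Continuous fun θ : ℝ => 2 * π * x * ((Real.sin θ) ^ 2 * Real.cos (2 * π * x * Real.cos θ)))).intervalIntegrable) 0 (2 * π))
  rw [Real.sin_two_pi, Real.sin_zero, zero_mul, zero_mul, sub_zero] at h0
  have hsplit : (∫ θ in (0:ℝ)..(2 * π),
      (Real.cos θ * Real.sin (2 * π * x * Real.cos θ) -
        2 * π * x * ((Real.sin θ) ^ 2 * Real.cos (2 * π * x * Real.cos θ)))) =
      (∫ θ in (0:ℝ)..(2 * π), Real.cos θ * Real.sin (2 * π * x * Real.cos θ)) -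
      2 * π * x * (∫ θ in (0:ℝ)..(2 * π), (Real.sin θ) ^ 2 * Real.cos (2 * π * x * Real.cos θ)) := by
    rw [intervalIntegral.integral_sub (g := fun θ => 2 * π * x * ((Real.sin θ) ^ 2 * Real.cos (2 * π * x * Real.cos θ))) (hcont1.intervalIntegrable 0 (2 * π))
      ((continuous_const.mul hcont2 : Continuous fun θ : ℝ => 2 * π * x * ((Real.sin θ) ^ 2 * Real.cos (2 * π * x * Real.cos θ))).intervalIntegrable 0 (2 * π)),
      intervalIntegral.integral_const_mul]
  rw [hsplit] at h0
  -- I2 + I3 = I0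
  have hI23 : (∫ θ in (0:ℝ)..(2 * π), (Real.sin θ) ^ 2 * Real.cos (2 * π * x * Real.cos θ)) +
      (∫ θ in (0:ℝ)..(2 * π), (Real.cos θ) ^ 2 * Real.cos (2 * π * x * Real.cos θ)) =
      sigmaHatOne x := by
    rw [← intervalIntegral.integral_add (hcont2.intervalIntegrable 0 (2 * π))
      (hcont3.intervalIntegrable 0 (2 * π))]
    unfold sigmaHatOne
    congr 1
    funext θ
    rw [← add_mul, Real.sin_sq_add_cos_sq, one_mul]
  -- fa as multiple of I1
  have hfa : fa x = (-(2 * π)) *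
      (∫ θ in (0:ℝ)..(2 * π), Real.cos θ * Real.sin (2 * π * x * Real.cos θ)) := by
    rw [← intervalIntegral.integral_const_mul]
    unfold fa
    congr 1
    funext θ
    ring
  have hfb : fb x = (-(2 * π) ^ 2) *
      (∫ θ in (0:ℝ)..(2 * π), (Real.cos θ) ^ 2 * Real.cos (2 * π * x * Real.cos θ)) := by
    rw [← intervalIntegral.integral_const_mul]
    unfold fb
    congr 1
    funext θ
    ring
  rw [hfa, hfb]
  linear_combination (-(2*π))*h0 - ((2*π)^2 * x) * hI23

noncomputable def wf (x : ℝ) : ℝ := Real.sqrt x * sigmaHatOne x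
noncomputable def gf (x : ℝ) : ℝ := sigmaHatOne x / (2 * Real.sqrt x) + Real.sqrt x * fa x
noncomputable def En (x : ℝ) : ℝ := (gf x) ^ 2 + (2 * π) ^ 2 * (wf x) ^ 2

lemma En_nonneg (x : ℝ) : 0 ≤ En x := by
  have := sq_nonneg (gf x); have := sq_nonneg (wf x); have := sq_nonneg (2 * π)
  unfold En; positivity

lemma hasDerivAt_wf {x : ℝ} (hx : 0 < x) : HasDerivAt wf (gf x) x := by
  have h := (Real.hasDerivAt_sqrt hx.ne').mul (hasDerivAt_f x)
  have hs : Real.sqrt x ≠ 0 := (Real.sqrt_pos.mpr hx).ne'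
  refine h.congr_deriv ?_
  unfold gf
  field_simp

lemma hasDerivAt_gf {x : ℝ} (hx : 0 < x) :
    HasDerivAt gf (-(2 * π) ^ 2 * wf x - wf x / (4 * x ^ 2)) x := by
  obtain ⟨s, rfl, hspos⟩ : ∃ s : ℝ, x = s ^ 2 ∧ 0 < s :=
    ⟨Real.sqrt x, (Real.sq_sqrt hx.le).symm, Real.sqrt_pos.mpr hx⟩
  have hss : Real.sqrt (s ^ 2) = s := Real.sqrt_sq hspos.le
  have hsne : s ≠ 0 := hspos.ne'
  have hxne : s ^ 2 ≠ 0 := by positivity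
  have h2s : (2 : ℝ) * Real.sqrt (s ^ 2) ≠ 0 := by rw [hss]; positivity
  have h1 : HasDerivAt (fun y => sigmaHatOne y / (2 * Real.sqrt y))
      ((fa (s ^ 2) * (2 * Real.sqrt (s ^ 2)) -
        sigmaHatOne (s ^ 2) * (2 * (1 / (2 * Real.sqrt (s ^ 2))))) /
        (2 * Real.sqrt (s ^ 2)) ^ 2) (s ^ 2) :=
    (hasDerivAt_f (s ^ 2)).div ((Real.hasDerivAt_sqrt hxne).const_mul 2) h2s
  have h2 : HasDerivAt (fun y => Real.sqrt y * fa y)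
      (1 / (2 * Real.sqrt (s ^ 2)) * fa (s ^ 2) + Real.sqrt (s ^ 2) * fb (s ^ 2)) (s ^ 2) :=
    (Real.hasDerivAt_sqrt hxne).mul (hasDerivAt_fa (s ^ 2))
  have h := h1.add h2
  have hfbeq : fb (s ^ 2) = -(fa (s ^ 2)) / s ^ 2 - (2 * π) ^ 2 * sigmaHatOne (s ^ 2) := by
    field_simp
    linear_combination bessel (s ^ 2)
  refine h.congr_deriv ?_
  rw [hfbeq]
  unfold wf
  rw [hss]
  field_simp
  ring

lemma hasDerivAt_En {x : ℝ} (hx : 0 < x) :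
    HasDerivAt En (-(wf x * gf x) / (2 * x ^ 2)) x := by
  have h := ((hasDerivAt_gf hx).pow 2).add
    (((hasDerivAt_wf hx).pow 2).const_mul ((2 * π) ^ 2))
  refine h.congr_deriv ?_
  have hx2 : x ^ 2 ≠ 0 := by positivity
  field_simp
  ring

lemma mono_of_hasDeriv {P p : ℝ → ℝ} {a b : ℝ} (hab : a ≤ b)
    (hP : ∀ t ∈ Set.Icc a b, HasDerivAt P (p t) t)
    (hp : ∀ t ∈ Set.Icc a b, 0 ≤ p t) : P a ≤ P b := by
  have hmono : MonotoneOn P (Set.Icc a b) := by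
    apply monotoneOn_of_deriv_nonneg (convex_Icc a b)
      (fun t ht => (hP t ht).continuousAt.continuousWithinAt)
      (fun t ht => (hP t (interior_subset ht)).differentiableAt.differentiableWithinAt)
    intro t ht
    rw [(hP t (interior_subset ht)).deriv]
    exact hp t (interior_subset ht)
  exact hmono (Set.left_mem_Icc.mpr hab) (Set.right_mem_Icc.mpr hab) hab

lemma hasDerivAt_expP {x : ℝ} (hx : 0 < x) :
    HasDerivAt (fun y : ℝ => Real.exp (-(8 * π * y)⁻¹))
      (Real.exp (-(8 * π * x)⁻¹) * (8 * π / (8 * π * x) ^ 2)) x := by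
  have hne : 8 * π * x ≠ 0 := by positivity
  have h := (((hasDerivAt_id x).const_mul (8 * π)).inv hne).neg.exp
  refine h.congr_deriv ?_
  simp only [Pi.neg_apply, Pi.inv_apply, id]
  field_simp

lemma hasDerivAt_expQ {x : ℝ} (hx : 0 < x) :
    HasDerivAt (fun y : ℝ => Real.exp ((8 * π * y)⁻¹))
      (Real.exp ((8 * π * x)⁻¹) * (-(8 * π) / (8 * π * x) ^ 2)) x := by
  have hne : 8 * π * x ≠ 0 := by positivity
  have h := (((hasDerivAt_id x).const_mul (8 * π)).inv hne).exp
  refine h.congr_deriv ?_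
  simp only [Pi.neg_apply, Pi.inv_apply, id]
  field_simp

lemma abs_wg_le (x : ℝ) : 4 * π * |wf x * gf x| ≤ En x := by
  have h1 := sq_nonneg (2 * π * wf x + gf x)
  have h2 := sq_nonneg (2 * π * wf x - gf x)
  have hπ := Real.pi_pos
  rcases abs_cases (wf x * gf x) with ⟨he, _⟩ | ⟨he, _⟩ <;> rw [he] <;> unfold En <;> nlinarith

lemma En_lower {c₀ t : ℝ} (hc₀ : 0 < c₀) (ht : c₀ ≤ t) :
    Real.exp (-(8 * π * c₀)⁻¹) * En c₀ ≤ En t := by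
  have hπ := Real.pi_pos
  set P : ℝ → ℝ := fun y => En y * Real.exp (-(8 * π * y)⁻¹) with hPdef
  have hPle : P c₀ ≤ P t := by
    apply mono_of_hasDeriv ht
    · intro s hs
      have hspos : 0 < s := lt_of_lt_of_le hc₀ hs.1
      exact (hasDerivAt_En hspos).mul (hasDerivAt_expP hspos)
    · intro s hs
      have hspos : 0 < s := lt_of_lt_of_le hc₀ hs.1
      have hwg := abs_wg_le s
      have habs : -(En s) ≤ 4 * π * (wf s * gf s) ∧ 4 * π * (wf s * gf s) ≤ En s := by
        constructor <;> nlinarith [neg_abs_le (wf s * gf s), le_abs_self (wf s * gf s)]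
      have hexp : 0 < Real.exp (-(8 * π * s)⁻¹) := Real.exp_pos _
      have hs2 : (0:ℝ) < s ^ 2 := by positivity
      have expand : -(wf s * gf s) / (2 * s ^ 2) * Real.exp (-(8 * π * s)⁻¹) +
          En s * (Real.exp (-(8 * π * s)⁻¹) * (8 * π / (8 * π * s) ^ 2)) =
          Real.exp (-(8 * π * s)⁻¹) * ((En s / (8 * π) - 4 * π * (wf s * gf s) / (8*π)) / s ^ 2) := by
        field_simp
        ring
      rw [expand]
      apply mul_nonneg hexp.le
      apply div_nonneg _ hs2.le
      rw [← sub_div]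
      apply div_nonneg _ (by positivity)
      linarith [habs.2]
  calc Real.exp (-(8 * π * c₀)⁻¹) * En c₀ = P c₀ := by rw [hPdef]; ring
    _ ≤ P t := hPle
    _ ≤ En t := by
        rw [hPdef]
        simp only
        have h1 : Real.exp (-(8 * π * t)⁻¹) ≤ 1 := by
          rw [Real.exp_le_one_iff]
          have ht0 : 0 < t := lt_of_lt_of_le hc₀ ht
          have : (0:ℝ) ≤ (8 * π * t)⁻¹ := by positivity
          linarith
        nlinarith [En_nonneg t, Real.exp_pos (-(8 * π * t)⁻¹)]

lemma En_upper {c₀ t : ℝ} (hc₀ : 0 < c₀) (ht : c₀ ≤ t) :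
    En t ≤ Real.exp ((8 * π * c₀)⁻¹) * En c₀ := by
  have hπ := Real.pi_pos
  set Q : ℝ → ℝ := fun y => En y * Real.exp ((8 * π * y)⁻¹) with hQdef
  have hQle : Q t ≤ Q c₀ := by
    have := mono_of_hasDeriv (P := fun y => -(Q y))
      (p := fun s => -((-(wf s * gf s) / (2 * s ^ 2)) * Real.exp ((8 * π * s)⁻¹) +
        En s * (Real.exp ((8 * π * s)⁻¹) * (-(8 * π) / (8 * π * s) ^ 2)))) ht ?_ ?_
    · have h' : -(Q c₀) ≤ -(Q t) := this
      linarith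
    · intro s hs
      have hspos : 0 < s := lt_of_lt_of_le hc₀ hs.1
      exact ((hasDerivAt_En hspos).mul (hasDerivAt_expQ hspos)).neg
    · intro s hs
      have hspos : 0 < s := lt_of_lt_of_le hc₀ hs.1
      have hwg := abs_wg_le s
      have habs : -(En s) ≤ 4 * π * (wf s * gf s) := by
        nlinarith [neg_abs_le (wf s * gf s)]
      have hexp : 0 < Real.exp ((8 * π * s)⁻¹) := Real.exp_pos _
      have hs2 : (0:ℝ) < s ^ 2 := by positivity
      show 0 ≤ -((-(wf s * gf s) / (2 * s ^ 2)) * Real.exp ((8 * π * s)⁻¹) +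
          En s * (Real.exp ((8 * π * s)⁻¹) * (-(8 * π) / (8 * π * s) ^ 2)))
      have expand : -((-(wf s * gf s) / (2 * s ^ 2)) * Real.exp ((8 * π * s)⁻¹) +
          En s * (Real.exp ((8 * π * s)⁻¹) * (-(8 * π) / (8 * π * s) ^ 2))) =
          Real.exp ((8 * π * s)⁻¹) * ((En s / (8 * π) + 4 * π * (wf s * gf s) / (8 * π)) / s ^ 2) := by
        field_simp
        ring
      rw [expand]
      apply mul_nonneg hexp.le
      apply div_nonneg _ hs2.le
      rw [← add_div]
      apply div_nonneg _ (by positivity)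
      linarith
  calc En t ≤ Q t := by
        rw [hQdef]
        simp only
        have h1 : 1 ≤ Real.exp ((8 * π * t)⁻¹) := by
          rw [Real.one_le_exp_iff]
          have ht0 : 0 < t := lt_of_lt_of_le hc₀ ht
          positivity
        nlinarith [En_nonneg t]
    _ ≤ Q c₀ := hQle
    _ = Real.exp ((8 * π * c₀)⁻¹) * En c₀ := by rw [hQdef]; ring

lemma f_pos_small {u : ℝ} (h0 : 0 < u) (h8 : u ≤ 1 / 8) : 0 < sigmaHatOne u := by
  have hπ := Real.pi_pos
  unfold sigmaHatOne
  apply intervalIntegral_pos_of_pos_on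
  · exact (Real.continuous_cos.comp (continuous_const.mul Real.continuous_cos)).intervalIntegrable 0 (2 * π)
  · intro θ _
    apply Real.cos_pos_of_mem_Ioo
    constructor
    · have h1 : |2 * π * u * Real.cos θ| ≤ 2 * π * u := by
        rw [abs_mul]
        calc |2 * π * u| * |Real.cos θ| ≤ |2 * π * u| * 1 :=
          mul_le_mul_of_nonneg_left (Real.abs_cos_le_one θ) (abs_nonneg _)
        _ = 2 * π * u := by rw [mul_one, abs_of_pos (by positivity)]
      have h2 : 2 * π * u ≤ π / 4 := by nlinarith
      have := neg_abs_le (2 * π * u * Real.cos θ)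
      nlinarith
    · have h1 : |2 * π * u * Real.cos θ| ≤ 2 * π * u := by
        rw [abs_mul]
        calc |2 * π * u| * |Real.cos θ| ≤ |2 * π * u| * 1 :=
          mul_le_mul_of_nonneg_left (Real.abs_cos_le_one θ) (abs_nonneg _)
        _ = 2 * π * u := by rw [mul_one, abs_of_pos (by positivity)]
      have h2 : 2 * π * u ≤ π / 4 := by nlinarith
      have := le_abs_self (2 * π * u * Real.cos θ)
      nlinarith
  · positivity

noncomputable def Fn (x : ℝ) : ℝ := (fa x) ^ 2 + (2 * π) ^ 2 * (sigmaHatOne x) ^ 2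

lemma hasDerivAt_Rn (x : ℝ) :
    HasDerivAt (fun y => y ^ 2 * Fn y) (2 * x * (2 * π) ^ 2 * (sigmaHatOne x) ^ 2) x := by
  have hFn : HasDerivAt Fn
      (2 * fa x ^ 1 * fb x + (2 * π) ^ 2 * (2 * sigmaHatOne x ^ 1 * fa x)) x :=
    ((hasDerivAt_fa x).pow 2).add (((hasDerivAt_f x).pow 2).const_mul ((2 * π) ^ 2))
  have h := (hasDerivAt_pow 2 x).mul hFn
  refine h.congr_deriv ?_
  unfold Fn
  linear_combination (2 * x * fa x) * bessel x

lemma Fn_pos {c : ℝ} (hc : 0 < c) : 0 < Fn c := by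
  have hπ := Real.pi_pos
  set u : ℝ := min c (1 / 8) with hu
  have hu0 : 0 < u := lt_min hc (by norm_num)
  have hu8 : u ≤ 1 / 8 := min_le_right _ _
  have huc : u ≤ c := min_le_left _ _
  have hmono : u ^ 2 * Fn u ≤ c ^ 2 * Fn c := by
    apply mono_of_hasDeriv huc (fun t _ => hasDerivAt_Rn t)
    intro t ht
    have ht0 : 0 < t := lt_of_lt_of_le hu0 ht.1
    positivity
  have hfu : 0 < sigmaHatOne u := f_pos_small hu0 hu8
  have hFu : 0 < Fn u := by unfold Fn; positivity
  nlinarith [mul_pos (pow_pos hu0 2) hFu, pow_pos hc 2]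

lemma En_pos {c : ℝ} (hc : 0 < c) : 0 < En c := by
  rcases (En_nonneg c).lt_or_eq with h | h
  · exact h
  · exfalso
    have hs : Real.sqrt c ≠ 0 := (Real.sqrt_pos.mpr hc).ne'
    have hπ := Real.pi_pos
    have hsum : (gf c) ^ 2 + (2 * π) ^ 2 * (wf c) ^ 2 = 0 := by unfold En at h; linarith
    have hpos : (0:ℝ) < (2 * π) ^ 2 := by positivity
    have hg1 : (gf c) ^ 2 = 0 := by nlinarith [sq_nonneg (gf c), sq_nonneg (wf c)]
    have hg2 : (wf c) ^ 2 = 0 := by nlinarith [sq_nonneg (gf c), sq_nonneg (wf c)]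
    have hg : gf c = 0 ∧ wf c = 0 :=
      ⟨pow_eq_zero_iff two_ne_zero |>.mp hg1, pow_eq_zero_iff two_ne_zero |>.mp hg2⟩
    have hf0 : sigmaHatOne c = 0 := by
      have := hg.2
      unfold wf at this
      exact (mul_eq_zero.mp this).resolve_left hs
    have hfa0 : fa c = 0 := by
      have := hg.1
      unfold gf at this
      rw [hf0] at this
      simp at this
      tauto
    have := Fn_pos hc
    unfold Fn at this
    rw [hf0, hfa0] at this
    simp at this

lemma cont_f : Continuous sigmaHatOne :=
  continuous_iff_continuousAt.mpr fun x => (hasDerivAt_f x).continuousAt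

lemma cont_fa : Continuous fa :=
  continuous_iff_continuousAt.mpr fun x => (hasDerivAt_fa x).continuousAt

lemma cont_wf : Continuous wf := Real.continuous_sqrt.mul cont_f

lemma integral_w_sq_lower {c₀ a b : ℝ} (hc₀ : 0 < c₀) (ha : c₀ ≤ a) (hab : a ≤ b) :
    (Real.exp (-(8 * π * c₀)⁻¹) * En c₀) * (b - a) -
      Real.exp ((8 * π * c₀)⁻¹) * En c₀ / (2 * π)
      ≤ (2 * (2 * π) ^ 2 + 1 / (4 * c₀ ^ 2)) * ∫ t in a..b, (wf t) ^ 2 := by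
  have hπ := Real.pi_pos
  have huIcc : Set.uIcc a b = Set.Icc a b := Set.uIcc_of_le hab
  have hpos : ∀ t ∈ Set.Icc a b, 0 < t := fun t ht => lt_of_lt_of_le (hc₀.trans_le ha) ht.1
  have hgon : ContinuousOn gf (Set.Icc a b) :=
    fun t ht => ((hasDerivAt_gf (hpos t ht)).continuousAt).continuousWithinAt
  have hwon : ContinuousOn wf (Set.Icc a b) := cont_wf.continuousOn
  have hEon : ContinuousOn En (Set.Icc a b) :=
    fun t ht => ((hasDerivAt_En (hpos t ht)).continuousAt).continuousWithinAt
  have hqon : ContinuousOn (fun t => (wf t) ^ 2 / (4 * t ^ 2)) (Set.Icc a b) := by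
    apply (hwon.pow 2).div (by fun_prop)
    intro t ht
    have := hpos t ht
    positivity
  have hIw : IntervalIntegrable (fun t => (wf t) ^ 2) volume a b :=
    ((cont_wf.pow 2).intervalIntegrable a b)
  have hIg : IntervalIntegrable (fun t => (gf t) ^ 2) volume a b := by
    rw [intervalIntegrable_iff_integrableOn_Icc_of_le hab]
    exact (hgon.pow 2).integrableOn_compact isCompact_Icc
  have hIE : IntervalIntegrable En volume a b := by
    rw [intervalIntegrable_iff_integrableOn_Icc_of_le hab]
    exact hEon.integrableOn_compact isCompact_Icc
  have hIq : IntervalIntegrable (fun t => (wf t) ^ 2 / (4 * t ^ 2)) volume a b := by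
    rw [intervalIntegrable_iff_integrableOn_Icc_of_le hab]
    exact hqon.integrableOn_compact isCompact_Icc
  -- FTC for (wf * gf)'
  have hwgderiv : ∀ t ∈ Set.uIcc a b, HasDerivAt (fun y => wf y * gf y)
      ((gf t) ^ 2 - (2 * π) ^ 2 * (wf t) ^ 2 - (wf t) ^ 2 / (4 * t ^ 2)) t := by
    intro t ht
    rw [huIcc] at ht
    have ht0 : 0 < t := hpos t ht
    have h := (hasDerivAt_wf ht0).mul (hasDerivAt_gf ht0)
    refine h.congr_deriv ?_
    have : t ^ 2 ≠ 0 := by positivity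
    field_simp
    ring
  have hIftc : IntervalIntegrable
      (fun t => (gf t) ^ 2 - (2 * π) ^ 2 * (wf t) ^ 2 - (wf t) ^ 2 / (4 * t ^ 2))
      volume a b := (hIg.sub (hIw.const_mul _)).sub hIq
  have hFTC := intervalIntegral.integral_eq_sub_of_hasDerivAt hwgderiv hIftc
  have hsplit : (∫ t in a..b,
      ((gf t) ^ 2 - (2 * π) ^ 2 * (wf t) ^ 2 - (wf t) ^ 2 / (4 * t ^ 2))) =
      (∫ t in a..b, (gf t) ^ 2) - (2 * π) ^ 2 * (∫ t in a..b, (wf t) ^ 2) -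
        (∫ t in a..b, (wf t) ^ 2 / (4 * t ^ 2)) := by
    rw [intervalIntegral.integral_sub (hIg.sub (hIw.const_mul _)) hIq,
      intervalIntegral.integral_sub hIg (hIw.const_mul _),
      intervalIntegral.integral_const_mul]
  rw [hsplit] at hFTC
  -- m (b-a) ≤ ∫ En
  set m := Real.exp (-(8 * π * c₀)⁻¹) * En c₀ with hm
  set M := Real.exp ((8 * π * c₀)⁻¹) * En c₀ with hM
  have hmE : m * (b - a) ≤ ∫ t in a..b, En t := by
    have h1 : (∫ _t in a..b, m) ≤ ∫ t in a..b, En t := by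
      apply intervalIntegral.integral_mono_on hab (intervalIntegrable_const) hIE
      intro t ht
      exact En_lower hc₀ (ha.trans ht.1)
    rw [intervalIntegral.integral_const, smul_eq_mul] at h1
    linarith
  -- ∫ En = ∫ g² + (2π)² ∫ w²
  have hEsplit : (∫ t in a..b, En t) =
      (∫ t in a..b, (gf t) ^ 2) + (2 * π) ^ 2 * (∫ t in a..b, (wf t) ^ 2) := by
    unfold En
    rw [intervalIntegral.integral_add hIg (hIw.const_mul _),
      intervalIntegral.integral_const_mul]
  -- ∫ w²/(4t²) ≤ (1/(4c₀²)) ∫ w²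
  have hq : (∫ t in a..b, (wf t) ^ 2 / (4 * t ^ 2)) ≤
      (1 / (4 * c₀ ^ 2)) * ∫ t in a..b, (wf t) ^ 2 := by
    rw [← intervalIntegral.integral_const_mul]
    apply intervalIntegral.integral_mono_on hab hIq (hIw.const_mul _)
    intro t ht
    have ht0 : 0 < t := hpos t ht
    have htc : c₀ ≤ t := ha.trans ht.1
    rw [div_eq_mul_inv, mul_comm]
    apply mul_le_mul_of_nonneg_right _ (sq_nonneg _)
    rw [one_div]
    apply inv_anti₀ (by positivity)
    nlinarith
  -- boundary terms
  have hbda : |wf a * gf a| ≤ M / (4 * π) := by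
    have h1 := abs_wg_le a
    have h2 := En_upper hc₀ ha
    rw [le_div_iff₀ (by positivity)]
    nlinarith
  have hbdb : |wf b * gf b| ≤ M / (4 * π) := by
    have h1 := abs_wg_le b
    have h2 := En_upper hc₀ (ha.trans hab)
    rw [le_div_iff₀ (by positivity)]
    nlinarith
  have hMpos : 0 < M := by
    rw [hM]
    exact mul_pos (Real.exp_pos _) (En_pos hc₀)
  have e1 := abs_le.mp hbda
  have e2 := abs_le.mp hbdb
  have hM2π : M / (2 * π) = M / (4 * π) + M / (4 * π) := by
    field_simp
    ring
  nlinarith [hmE, hEsplit, hFTC, hq, e1.1, e2.2]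

lemma integral_f_sq_ge {a b : ℝ} (h0 : 0 < a) (hab : a ≤ b) :
    (∫ t in a..b, (wf t) ^ 2) / b ≤ ∫ t in a..b, (sigmaHatOne t) ^ 2 := by
  have hb : 0 < b := h0.trans_le hab
  rw [← intervalIntegral.integral_div]
  apply intervalIntegral.integral_mono_on hab
    (((cont_wf.pow 2).div_const b).intervalIntegrable a b)
    ((cont_f.pow 2).intervalIntegrable a b)
  intro t ht
  have ht0 : 0 < t := h0.trans_le ht.1
  have hw : wf t ^ 2 = t * sigmaHatOne t ^ 2 := by
    unfold wf; rw [mul_pow, Real.sq_sqrt ht0.le]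
  simp only [Pi.pow_apply]
  rw [hw, div_le_iff₀ hb]
  nlinarith [sq_nonneg (sigmaHatOne t), ht.2]

lemma exists_ne_zero {c₀ a b : ℝ} (hc₀ : 0 < c₀) (ha : c₀ ≤ a) (hab : a < b) :
    ∃ t ∈ Set.Ioo a b, sigmaHatOne t ≠ 0 := by
  by_contra hcon
  push_neg at hcon
  set t₀ := (a + b) / 2 with ht₀def
  have ht₀ : t₀ ∈ Set.Ioo a b := ⟨by rw [ht₀def]; linarith, by rw [ht₀def]; linarith⟩
  have ht₀pos : 0 < t₀ := lt_of_lt_of_le (hc₀.trans_le ha) ht₀.1.le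
  have hw0 : wf =ᶠ[nhds t₀] (fun _ => (0:ℝ)) := by
    apply Filter.eventually_of_mem (Ioo_mem_nhds ht₀.1 ht₀.2)
    intro y hy
    unfold wf
    rw [hcon y hy, mul_zero]
  have hdw := hasDerivAt_wf ht₀pos
  have hzero : HasDerivAt wf 0 t₀ :=
    (hasDerivAt_const t₀ (0:ℝ)).congr_of_eventuallyEq hw0
  have hg0 : gf t₀ = 0 := hdw.unique hzero
  have hwf0 : wf t₀ = 0 := by unfold wf; rw [hcon t₀ ht₀, mul_zero]
  have hE0 : En t₀ = 0 := by unfold En; rw [hg0, hwf0]; ring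
  have hlow := En_lower hc₀ (ha.trans ht₀.1.le)
  have : 0 < Real.exp (-(8 * π * c₀)⁻¹) * En c₀ :=
    mul_pos (Real.exp_pos _) (En_pos hc₀)
  rw [hE0] at hlow
  linarith

lemma integral_f_sq_pos {c₀ a b : ℝ} (hc₀ : 0 < c₀) (ha : c₀ ≤ a) (hab : a < b) :
    0 < ∫ t in a..b, (sigmaHatOne t) ^ 2 := by
  obtain ⟨t₀, ht₀, hne⟩ := exists_ne_zero hc₀ ha hab
  set c := sigmaHatOne t₀ ^ 2 with hcdef
  have hcpos : 0 < c := lt_of_le_of_ne (sq_nonneg _) (Ne.symm (pow_ne_zero 2 hne))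
  have hcont : Filter.Tendsto (fun t => sigmaHatOne t ^ 2) (nhds t₀) (nhds c) :=
    ((cont_f.pow 2).continuousAt)
  have hev : (fun t => sigmaHatOne t ^ 2) ⁻¹' Set.Ioi (c / 2) ∈ nhds t₀ :=
    hcont (Ioi_mem_nhds (by linarith))
  have hmem := Filter.inter_mem hev (Ioo_mem_nhds ht₀.1 ht₀.2)
  obtain ⟨ε, hε, hball⟩ := Metric.mem_nhds_iff.mp hmem
  set u := t₀ - ε / 2 with hu
  set v := t₀ + ε / 2 with hv
  have hsub : Set.Icc u v ⊆ (fun t => sigmaHatOne t ^ 2) ⁻¹' Set.Ioi (c / 2) ∩ Set.Ioo a b := by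
    intro s hs
    apply hball
    rw [Metric.mem_ball, Real.dist_eq, abs_sub_lt_iff]
    constructor <;> [skip; skip] <;> simp only [hu, hv] at hs <;>
      [linarith [hs.2]; linarith [hs.1]]
  have huv : u < v := by rw [hu, hv]; linarith
  have hau : a < u := by
    have := (hsub (Set.left_mem_Icc.mpr huv.le)).2.1
    linarith
  have hvb : v < b := (hsub (Set.right_mem_Icc.mpr huv.le)).2.2
  have hint : ∀ p q : ℝ, IntervalIntegrable (fun t => sigmaHatOne t ^ 2) volume p q :=
    fun p q => (cont_f.pow 2).intervalIntegrable p q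
  have hsplit1 : (∫ t in a..u, (sigmaHatOne t) ^ 2) + (∫ t in u..b, (sigmaHatOne t) ^ 2) =
      ∫ t in a..b, (sigmaHatOne t) ^ 2 :=
    intervalIntegral.integral_add_adjacent_intervals (hint a u) (hint u b)
  have hsplit2 : (∫ t in u..v, (sigmaHatOne t) ^ 2) + (∫ t in v..b, (sigmaHatOne t) ^ 2) =
      ∫ t in u..b, (sigmaHatOne t) ^ 2 :=
    intervalIntegral.integral_add_adjacent_intervals (hint u v) (hint v b)
  have h1 : 0 ≤ ∫ t in a..u, (sigmaHatOne t) ^ 2 :=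
    intervalIntegral.integral_nonneg hau.le (fun t _ => sq_nonneg _)
  have h3 : 0 ≤ ∫ t in v..b, (sigmaHatOne t) ^ 2 :=
    intervalIntegral.integral_nonneg hvb.le (fun t _ => sq_nonneg _)
  have h2 : (v - u) * (c / 2) ≤ ∫ t in u..v, (sigmaHatOne t) ^ 2 := by
    have := intervalIntegral.integral_mono_on huv.le intervalIntegrable_const (hint u v)
      (fun t ht => le_of_lt (hsub ht).1)
    rwa [intervalIntegral.integral_const, smul_eq_mul] at this
  have : 0 < (v - u) * (c / 2) := by
    apply mul_pos (by linarith) (by linarith)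
  linarith

set_option maxHeartbeats 1600000 in
/-- For any constants `c₀ > 0`, `c₁ > 1` there is `c₂ > 0` such that for all `x > c₀`,
`∫_x^{c₁ x} |σ̂₁(u)|² du ≥ c₂`. -/
theorem lower_bound_sigmaHat_sq_integral :
    ∀ c₀ > (0:ℝ), ∀ c₁ > (1:ℝ), ∃ c₂ > (0:ℝ), ∀ x > c₀,
      c₂ ≤ ∫ u in x..(c₁ * x), (sigmaHatOne u) ^ 2 := by
  intro c₀ hc₀ c₁ hc₁
  have hπ := Real.pi_pos
  set m := Real.exp (-(8 * π * c₀)⁻¹) * En c₀ with hmdef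
  have hm : 0 < m := mul_pos (Real.exp_pos _) (En_pos hc₀)
  set M := Real.exp ((8 * π * c₀)⁻¹) * En c₀ with hMdef
  have hM : 0 < M := mul_pos (Real.exp_pos _) (En_pos hc₀)
  set C₃ : ℝ := 2 * (2 * π) ^ 2 + 1 / (4 * c₀ ^ 2) with hC₃def
  have hC₃ : 0 < C₃ := by rw [hC₃def]; positivity
  set ℓ₀ := (c₁ - 1) * c₀ with hℓ₀def
  have hℓ₀ : 0 < ℓ₀ := mul_pos (by linarith) hc₀
  set X₁ := max c₀ (M / (π * m * (c₁ - 1))) with hX₁def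
  have hcX₁ : c₀ ≤ X₁ := le_max_left _ _
  -- the function G and its min over the compact set
  set G : ℝ → ℝ := fun a => ∫ t in a..(a + ℓ₀), (sigmaHatOne t) ^ 2 with hGdef
  have hPrim : Continuous fun y : ℝ => ∫ t in c₀..y, (sigmaHatOne t) ^ 2 :=
    intervalIntegral.continuous_primitive
      (fun p q => (cont_f.pow 2).intervalIntegrable p q) c₀
  have hGcont : Continuous G := by
    have h1 : ∀ a : ℝ, G a = (∫ t in c₀..(a + ℓ₀), (sigmaHatOne t) ^ 2) -
        (∫ t in c₀..a, (sigmaHatOne t) ^ 2) := by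
      intro a
      rw [hGdef]
      simp only
      rw [← intervalIntegral.integral_add_adjacent_intervals (f := fun t => sigmaHatOne t ^ 2) (a := c₀) (b := a) (c := a + ℓ₀)
        ((cont_f.pow 2).intervalIntegrable c₀ a) ((cont_f.pow 2).intervalIntegrable a (a + ℓ₀))]
      ring
    have : G = fun a => (∫ t in c₀..(a + ℓ₀), (sigmaHatOne t) ^ 2) -
        (∫ t in c₀..a, (sigmaHatOne t) ^ 2) := funext h1
    rw [this]
    exact (hPrim.comp (continuous_id.add continuous_const)).sub hPrim
  obtain ⟨z, hz, hzmin⟩ := isCompact_Icc.exists_isMinOn (Set.nonempty_Icc.mpr hcX₁)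
    hGcont.continuousOn
  set κ := G z with hκdef
  have hκ : 0 < κ := integral_f_sq_pos hc₀ hz.1 (by linarith)
  set c₂ := min κ (m * (c₁ - 1) / (2 * C₃ * c₁)) with hc₂def
  have hc₁0 : (0:ℝ) < c₁ := by linarith
  have hc₂pos : 0 < c₂ := lt_min hκ
    (div_pos (mul_pos hm (by linarith)) (mul_pos (mul_pos two_pos hC₃) hc₁0))
  clear_value m M C₃ ℓ₀ X₁ κ c₂
  refine ⟨c₂, hc₂pos, ?_⟩
  intro x hx
  have hx0 : 0 < x := hc₀.trans hx
  have hxb : x ≤ c₁ * x := by nlinarith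
  rcases le_or_gt x X₁ with hcase | hcase
  · -- small x : use compact minimum
    have hxmem : x ∈ Set.Icc c₀ X₁ := ⟨hx.le, hcase⟩
    have hGx : κ ≤ G x := by rw [hκdef]; exact hzmin hxmem
    have hsub : x + ℓ₀ ≤ c₁ * x := by
      rw [hℓ₀def]
      nlinarith
    have hsplit : (∫ t in x..(x + ℓ₀), (sigmaHatOne t) ^ 2) +
        (∫ t in (x + ℓ₀)..(c₁ * x), (sigmaHatOne t) ^ 2) =
        ∫ t in x..(c₁ * x), (sigmaHatOne t) ^ 2 :=
      intervalIntegral.integral_add_adjacent_intervals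
        ((cont_f.pow 2).intervalIntegrable _ _) ((cont_f.pow 2).intervalIntegrable _ _)
    have hrest : 0 ≤ ∫ t in (x + ℓ₀)..(c₁ * x), (sigmaHatOne t) ^ 2 :=
      intervalIntegral.integral_nonneg hsub (fun t _ => sq_nonneg _)
    have : c₂ ≤ κ := by rw [hc₂def]; exact min_le_left _ _
    have hGxval : G x = ∫ t in x..(x + ℓ₀), (sigmaHatOne t) ^ 2 := by rw [hGdef]
    linarith [hGx, hsplit, hrest]
  · -- large x : integration by parts bound
    have hX₁x : M / (π * m * (c₁ - 1)) ≤ x := by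
      rw [hX₁def] at hcase
      exact le_trans (le_max_right _ _) hcase.le
    have key := integral_w_sq_lower hc₀ hx.le hxb
    rw [← hmdef, ← hMdef, ← hC₃def] at key
    have hba : c₁ * x - x = (c₁ - 1) * x := by ring
    rw [hba] at key
    have hd1 : 0 < π * m * (c₁ - 1) := mul_pos (mul_pos hπ hm) (by linarith)
    rw [div_le_iff₀ hd1] at hX₁x
    have hMx : M / (2 * π) ≤ m * ((c₁ - 1) * x) / 2 := by
      rw [div_le_iff₀ (by positivity : (0:ℝ) < 2 * π)]
      nlinarith
    have hIw : m * ((c₁ - 1) * x) / 2 ≤ C₃ * ∫ t in x..(c₁ * x), (wf t) ^ 2 := by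
      linarith
    have hIf := integral_f_sq_ge hx0 hxb
    set I := ∫ t in x..(c₁ * x), (wf t) ^ 2 with hIdef
    set J := ∫ u in x..(c₁ * x), (sigmaHatOne u) ^ 2 with hJdef
    clear_value I J
    have hc₁x : 0 < c₁ * x := mul_pos hc₁0 hx0
    have hIw2 : m * (c₁ - 1) * x ≤ I * (2 * C₃) := by nlinarith [hIw]
    have hfin : m * (c₁ - 1) / (2 * C₃ * c₁) ≤ J := by
      have h1 : m * (c₁ - 1) / (2 * C₃ * c₁) ≤ I / (c₁ * x) := by
        rw [div_le_div_iff₀ (mul_pos (mul_pos two_pos hC₃) hc₁0) hc₁x]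
        have h2 := mul_le_mul_of_nonneg_right hIw2 hc₁0.le
        nlinarith [h2]
      linarith
    rw [hc₂def]
    exact le_trans (min_le_right _ _) hfin
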